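/- Let gl(4,ℂ) be the Lie algebra of 4×4 complex matrices with commutator bracket and matrix units E_{ab}. Let V be a Lie module over gl(4,ℂ) and v ∈ V with E_{ab} ⬝ v = 0 for all a > b and E_{aa} ⬝ v = μ_a • v for scalars μ_1,…,μ_4 ∈ ℂ. Define d = ½(μ_1+μ_2−μ_3−μ_4), j_1 = ½(μ_2−μ_1), j_2 = ½(μ_4−μ_3). Then E_{42} ⬝ (E_{31} ⬝ (E_{13} ⬝ (E_{24} ⬝ v))) − E_{42} ⬝ (E_{31} ⬝ (E_{23} ⬝ (E_{14} ⬝ v))) − E_{41} ⬝ (E_{32} ⬝ (E_{13} ⬝ (E_{24} ⬝ v))) + E_{41} ⬝ (E_{32} ⬝ (E_{23} ⬝ (E_{14} ⬝ v))) = 2(d² − j_1² − j_2² − d − j_1 − j_2) • v; in particular, when j_1 j_2 = 0 this scalar equals 2(d − j_1 − j_2 − 1)(d + j_1 + j_2), which vanishes exactly under the massless conditions d = j_1 + j_2 + 1 or d = −j_1 − j_2. -/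

import Mathlib

open scoped BigOperators

attribute [local instance 100] LieRing.ofAssociativeRing

/-- The matrix unit `E_{ab}` of `gl(4,ℂ)`. -/
noncomputable def glE (a b : Fin 4) : Matrix (Fin 4) (Fin 4) ℂ :=
  Matrix.single a b 1

lemma glE_mul (a b c d : Fin 4) :
    glE a b * glE c d = if b = c then glE a d else 0 := by
  unfold glE
  split
  · next h => subst h; simp
  · next h => exact Matrix.single_mul_single_of_ne 1 a b c h 1

lemma glE_lie (a b c d : Fin 4) :
    ⁅glE a b, glE c d⁆ =
      (if b = c then glE a d else 0) - (if d = a then glE c b else 0) := by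
  rw [Ring.lie_def, glE_mul, glE_mul]

/-- On a lowest-weight vector `v` of a `gl(4,ℂ)`-module with lowest weight `μ`, the
operator `(W*)†W* = (E₄₂E₃₁ − E₄₁E₃₂)(E₁₃E₂₄ − E₂₃E₁₄)` acts by the scalar
`2(d² − j₁² − j₂² − d − j₁ − j₂)`; moreover when `j₁j₂ = 0` this scalar equals
`2(d − j₁ − j₂ − 1)(d + j₁ + j₂)`, which vanishes exactly when `d = j₁ + j₂ + 1` or
`d = −j₁ − j₂` (matrix-unit indices here are `0`-based). -/
theorem Wstar_action_on_lowest_weight (V : Type*) [AddCommGroup V] [Module ℂ V]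
    [LieRingModule (Matrix (Fin 4) (Fin 4) ℂ) V]
    [LieModule ℂ (Matrix (Fin 4) (Fin 4) ℂ) V]
    (v : V) (μ : Fin 4 → ℂ)
    (hlow : ∀ a b : Fin 4, b < a → ⁅glE a b, v⁆ = 0)
    (hdiag : ∀ a : Fin 4, ⁅glE a a, v⁆ = μ a • v)
    (d j1 j2 : ℂ)
    (hd : d = (1 / 2 : ℂ) * (μ 0 + μ 1 - μ 2 - μ 3))
    (hj1 : j1 = (1 / 2 : ℂ) * (μ 1 - μ 0))
    (hj2 : j2 = (1 / 2 : ℂ) * (μ 3 - μ 2)) :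
    (⁅glE 3 1, ⁅glE 2 0, ⁅glE 0 2, ⁅glE 1 3, v⁆⁆⁆⁆ -
        ⁅glE 3 1, ⁅glE 2 0, ⁅glE 1 2, ⁅glE 0 3, v⁆⁆⁆⁆ -
        ⁅glE 3 0, ⁅glE 2 1, ⁅glE 0 2, ⁅glE 1 3, v⁆⁆⁆⁆ +
        ⁅glE 3 0, ⁅glE 2 1, ⁅glE 1 2, ⁅glE 0 3, v⁆⁆⁆⁆ =
      (2 * (d ^ 2 - j1 ^ 2 - j2 ^ 2 - d - j1 - j2)) • v) ∧
    (j1 * j2 = 0 →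
      2 * (d ^ 2 - j1 ^ 2 - j2 ^ 2 - d - j1 - j2) =
          2 * (d - j1 - j2 - 1) * (d + j1 + j2) ∧
        (2 * (d - j1 - j2 - 1) * (d + j1 + j2) = 0 ↔
          d = j1 + j2 + 1 ∨ d = -(j1 + j2))) := by
  have h10 : ⁅glE 1 0, v⁆ = 0 := hlow 1 0 (by decide)
  have h20 : ⁅glE 2 0, v⁆ = 0 := hlow 2 0 (by decide)
  have h21 : ⁅glE 2 1, v⁆ = 0 := hlow 2 1 (by decide)
  have h30 : ⁅glE 3 0, v⁆ = 0 := hlow 3 0 (by decide)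
  have h31 : ⁅glE 3 1, v⁆ = 0 := hlow 3 1 (by decide)
  have h32 : ⁅glE 3 2, v⁆ = 0 := hlow 3 2 (by decide)
  -- basic sl(2) computations
  have w3113 : ⁅glE 3 1, ⁅glE 1 3, v⁆⁆ = (μ 3 - μ 1) • v := by
    rw [leibniz_lie, h31, lie_zero, add_zero,
      show ⁅glE 3 1, glE 1 3⁆ = glE 3 3 - glE 1 1 from by simp [glE_lie],
      sub_lie, hdiag 3, hdiag 1, ← sub_smul]
  have w3223 : ⁅glE 3 2, ⁅glE 2 3, v⁆⁆ = (μ 3 - μ 2) • v := by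
    rw [leibniz_lie, h32, lie_zero, add_zero,
      show ⁅glE 3 2, glE 2 3⁆ = glE 3 3 - glE 2 2 from by simp [glE_lie],
      sub_lie, hdiag 3, hdiag 2, ← sub_smul]
  have w3003 : ⁅glE 3 0, ⁅glE 0 3, v⁆⁆ = (μ 3 - μ 0) • v := by
    rw [leibniz_lie, h30, lie_zero, add_zero,
      show ⁅glE 3 0, glE 0 3⁆ = glE 3 3 - glE 0 0 from by simp [glE_lie],
      sub_lie, hdiag 3, hdiag 0, ← sub_smul]
  have w1001 : ⁅glE 1 0, ⁅glE 0 1, v⁆⁆ = (μ 1 - μ 0) • v := by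
    rw [leibniz_lie, h10, lie_zero, add_zero,
      show ⁅glE 1 0, glE 0 1⁆ = glE 1 1 - glE 0 0 from by simp [glE_lie],
      sub_lie, hdiag 1, hdiag 0, ← sub_smul]
  -- Term 1
  have t1a : ⁅glE 2 0, ⁅glE 1 3, v⁆⁆ = 0 := by
    rw [leibniz_lie, h20, lie_zero, add_zero,
      show ⁅glE 2 0, glE 1 3⁆ = 0 from by simp [glE_lie], zero_lie]
  have t1b : ⁅glE 2 2, ⁅glE 1 3, v⁆⁆ = μ 2 • ⁅glE 1 3, v⁆ := by
    rw [leibniz_lie, show ⁅glE 2 2, glE 1 3⁆ = 0 from by simp [glE_lie],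
      zero_lie, zero_add, hdiag 2, lie_smul]
  have t1c : ⁅glE 0 0, ⁅glE 1 3, v⁆⁆ = μ 0 • ⁅glE 1 3, v⁆ := by
    rw [leibniz_lie, show ⁅glE 0 0, glE 1 3⁆ = 0 from by simp [glE_lie],
      zero_lie, zero_add, hdiag 0, lie_smul]
  have t1d : ⁅glE 2 0, ⁅glE 0 2, ⁅glE 1 3, v⁆⁆⁆ = (μ 2 - μ 0) • ⁅glE 1 3, v⁆ := by
    rw [leibniz_lie, t1a, lie_zero, add_zero,
      show ⁅glE 2 0, glE 0 2⁆ = glE 2 2 - glE 0 0 from by simp [glE_lie],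
      sub_lie, t1b, t1c, ← sub_smul]
  have hT1 : ⁅glE 3 1, ⁅glE 2 0, ⁅glE 0 2, ⁅glE 1 3, v⁆⁆⁆⁆ =
      ((μ 2 - μ 0) * (μ 3 - μ 1)) • v := by
    rw [t1d, lie_smul, w3113, smul_smul]
  -- Term 2
  have t2a : ⁅glE 2 0, ⁅glE 0 3, v⁆⁆ = ⁅glE 2 3, v⁆ := by
    rw [leibniz_lie, h20, lie_zero, add_zero,
      show ⁅glE 2 0, glE 0 3⁆ = glE 2 3 from by simp [glE_lie]]
  have t2b : ⁅glE 1 0, ⁅glE 0 3, v⁆⁆ = ⁅glE 1 3, v⁆ := by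
    rw [leibniz_lie, h10, lie_zero, add_zero,
      show ⁅glE 1 0, glE 0 3⁆ = glE 1 3 from by simp [glE_lie]]
  have t2c : ⁅glE 2 0, ⁅glE 1 2, ⁅glE 0 3, v⁆⁆⁆ =
      -⁅glE 1 3, v⁆ + ⁅glE 1 2, ⁅glE 2 3, v⁆⁆ := by
    rw [leibniz_lie, show ⁅glE 2 0, glE 1 2⁆ = -glE 1 0 from by simp [glE_lie],
      neg_lie, t2b, t2a]
  have t2d : ⁅glE 3 1, ⁅glE 2 3, v⁆⁆ = 0 := by
    rw [leibniz_lie, h31, lie_zero, add_zero,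
      show ⁅glE 3 1, glE 2 3⁆ = -glE 2 1 from by simp [glE_lie], neg_lie, h21, neg_zero]
  have t2e : ⁅glE 3 1, ⁅glE 1 2, ⁅glE 2 3, v⁆⁆⁆ = (μ 3 - μ 2) • v := by
    rw [leibniz_lie, t2d, lie_zero, add_zero,
      show ⁅glE 3 1, glE 1 2⁆ = glE 3 2 from by simp [glE_lie], w3223]
  have hT2 : ⁅glE 3 1, ⁅glE 2 0, ⁅glE 1 2, ⁅glE 0 3, v⁆⁆⁆⁆ =
      (-(μ 3 - μ 1) + (μ 3 - μ 2)) • v := by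
    rw [t2c, lie_add, lie_neg, w3113, t2e, ← neg_smul, ← add_smul]
  -- Term 3
  have t3a : ⁅glE 2 1, ⁅glE 1 3, v⁆⁆ = ⁅glE 2 3, v⁆ := by
    rw [leibniz_lie, h21, lie_zero, add_zero,
      show ⁅glE 2 1, glE 1 3⁆ = glE 2 3 from by simp [glE_lie]]
  have t3b : ⁅glE 0 1, ⁅glE 1 3, v⁆⁆ = ⁅glE 0 3, v⁆ + ⁅glE 1 3, ⁅glE 0 1, v⁆⁆ := by
    rw [leibniz_lie, show ⁅glE 0 1, glE 1 3⁆ = glE 0 3 from by simp [glE_lie]]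
  have t3c : ⁅glE 2 1, ⁅glE 0 2, ⁅glE 1 3, v⁆⁆⁆ =
      -(⁅glE 0 3, v⁆ + ⁅glE 1 3, ⁅glE 0 1, v⁆⁆) + ⁅glE 0 2, ⁅glE 2 3, v⁆⁆ := by
    rw [leibniz_lie, show ⁅glE 2 1, glE 0 2⁆ = -glE 0 1 from by simp [glE_lie],
      neg_lie, t3b, t3a]
  have t3e : ⁅glE 3 0, ⁅glE 0 1, v⁆⁆ = 0 := by
    rw [leibniz_lie, h30, lie_zero, add_zero,
      show ⁅glE 3 0, glE 0 1⁆ = glE 3 1 from by simp [glE_lie], h31]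
  have t3g : ⁅glE 3 0, ⁅glE 1 3, ⁅glE 0 1, v⁆⁆⁆ = -((μ 1 - μ 0) • v) := by
    rw [leibniz_lie, t3e, lie_zero, add_zero,
      show ⁅glE 3 0, glE 1 3⁆ = -glE 1 0 from by simp [glE_lie], neg_lie, w1001]
  have t3h : ⁅glE 3 0, ⁅glE 2 3, v⁆⁆ = 0 := by
    rw [leibniz_lie, h30, lie_zero, add_zero,
      show ⁅glE 3 0, glE 2 3⁆ = -glE 2 0 from by simp [glE_lie], neg_lie, h20, neg_zero]
  have t3i : ⁅glE 3 0, ⁅glE 0 2, ⁅glE 2 3, v⁆⁆⁆ = (μ 3 - μ 2) • v := by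
    rw [leibniz_lie, t3h, lie_zero, add_zero,
      show ⁅glE 3 0, glE 0 2⁆ = glE 3 2 from by simp [glE_lie], w3223]
  have hT3 : ⁅glE 3 0, ⁅glE 2 1, ⁅glE 0 2, ⁅glE 1 3, v⁆⁆⁆⁆ =
      (-(μ 3 - μ 0) + (μ 1 - μ 0) + (μ 3 - μ 2)) • v := by
    rw [t3c, lie_add, lie_neg, lie_add, w3003, t3g, t3i]
    rw [neg_add, neg_neg, ← neg_smul, ← add_smul, ← add_smul]
  -- Term 4
  have t4a : ⁅glE 2 1, ⁅glE 0 3, v⁆⁆ = 0 := by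
    rw [leibniz_lie, h21, lie_zero, add_zero,
      show ⁅glE 2 1, glE 0 3⁆ = 0 from by simp [glE_lie], zero_lie]
  have t4b : ⁅glE 2 2, ⁅glE 0 3, v⁆⁆ = μ 2 • ⁅glE 0 3, v⁆ := by
    rw [leibniz_lie, show ⁅glE 2 2, glE 0 3⁆ = 0 from by simp [glE_lie],
      zero_lie, zero_add, hdiag 2, lie_smul]
  have t4c : ⁅glE 1 1, ⁅glE 0 3, v⁆⁆ = μ 1 • ⁅glE 0 3, v⁆ := by
    rw [leibniz_lie, show ⁅glE 1 1, glE 0 3⁆ = 0 from by simp [glE_lie],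
      zero_lie, zero_add, hdiag 1, lie_smul]
  have t4d : ⁅glE 2 1, ⁅glE 1 2, ⁅glE 0 3, v⁆⁆⁆ = (μ 2 - μ 1) • ⁅glE 0 3, v⁆ := by
    rw [leibniz_lie, t4a, lie_zero, add_zero,
      show ⁅glE 2 1, glE 1 2⁆ = glE 2 2 - glE 1 1 from by simp [glE_lie],
      sub_lie, t4b, t4c, ← sub_smul]
  have hT4 : ⁅glE 3 0, ⁅glE 2 1, ⁅glE 1 2, ⁅glE 0 3, v⁆⁆⁆⁆ =
      ((μ 2 - μ 1) * (μ 3 - μ 0)) • v := by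
    rw [t4d, lie_smul, w3003, smul_smul]
  refine ⟨?_, fun hj => ⟨by linear_combination 4 * hj, ?_, ?_⟩⟩
  · rw [hT1, hT2, hT3, hT4, hd, hj1, hj2, ← sub_smul, ← sub_smul, ← add_smul]
    congr 1
    ring
  · intro h
    rcases mul_eq_zero.mp h with h' | h'
    · rcases mul_eq_zero.mp h' with h2 | h3
      · exact absurd h2 two_ne_zero
      · left; linear_combination h3
    · right; linear_combination h'
  · rintro (h | h) <;> rw [h] <;> ring
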